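/- Let G be the 2-edge-colored graph obtained from a k-edge-connected k-regular bipartite graph H' = (V1 ∪ V2, E_blue) with |V1| = |V2| ≥ k+1, all of whose edges are blue, by adding a red perfect matching between V1 and V2 (disjoint from the blue edges) and all red edges inside V1 and inside V2. Then (V1, V2) is the unique (up to swapping) 2-partition of V(G) for which the blue bipartite subgraph induced by crossing edges is connected, and for this partition the red bipartite subgraph induced by crossing edges is a perfect matching, hence disconnected (when |V1| ≥ 2). Consequently G has no 2-partition for which both the red and the blue crossing subgraphs are connected. -/

import Mathlib

/-- The spanning subgraph of `B` whose edges are the edges of `B` with exactly one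
endpoint in `X`. -/
def crossSubgraph {V : Type*} (B : SimpleGraph V) (X : Set V) : SimpleGraph V where
  Adj u v := B.Adj u v ∧ ¬ ((u ∈ X) ↔ (v ∈ X))
  symm := ⟨fun u v h => ⟨h.1.symm, fun hiff => h.2 hiff.symm⟩⟩
  loopless := ⟨fun v h => h.2 Iff.rfl⟩

/-- `G` is `k`-edge-connected: more than one vertex, and deleting any set of fewer than
`k` edges leaves it connected. -/
def KEdgeConnected {V : Type*} (G : SimpleGraph V) (k : ℕ) : Prop :=
  1 < Nat.card V ∧ ∀ s : Set (Sym2 V), s.ncard < k → (G.deleteEdges s).Connected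

/-- Let `Bl` be a `k`-edge-connected `k`-regular bipartite (blue) graph with parts
`V1, V1ᶜ` of equal size at least `k+1`, let `μ` be a red perfect matching between the
parts disjoint from the blue edges, and let `Red` consist of the matching together with
all pairs inside each part.  Then `(V1, V1ᶜ)` is the unique 2-partition whose blue
crossing subgraph is connected; for that partition the red crossing subgraph is exactly
the perfect matching and is disconnected; consequently no 2-partition has both crossing
subgraphs connected. -/
lemma walk_invar {V : Type*} {G : SimpleGraph V} {P : V → Prop}
    (h : ∀ u v, G.Adj u v → P u → P v) {u v : V} (w : G.Walk u v) :
    P u → P v := by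
  induction w with
  | nil => exact id
  | cons ha _ ih => exact fun hu => ih (h _ _ ha hu)

theorem stmt_15 {V : Type*} [Fintype V] (k : ℕ) (hk : 1 ≤ k)
    (V1 : Set V) (Bl : SimpleGraph V)
    (hbip : ∀ u v : V, Bl.Adj u v → ((u ∈ V1) ↔ v ∉ V1))
    (hreg : ∀ v : V, (Bl.neighborSet v).ncard = k)
    (hec : KEdgeConnected Bl k)
    (hsize : V1.ncard = V1ᶜ.ncard ∧ k + 1 ≤ V1.ncard)
    (μ : V → V) (hinv : ∀ v, μ (μ v) = v) (hnofix : ∀ v, μ v ≠ v)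
    (hcrossμ : ∀ v, (v ∈ V1) ↔ μ v ∉ V1) (hdisj : ∀ v, ¬ Bl.Adj v (μ v))
    (Red : SimpleGraph V)
    (hred : ∀ u v : V, Red.Adj u v ↔ (u ≠ v ∧ (((u ∈ V1) ↔ (v ∈ V1)) ∨ v = μ u))) :
    (∀ X : Set V, (crossSubgraph Bl X).Connected → (X = V1 ∨ X = V1ᶜ)) ∧
    (∀ u v : V, (crossSubgraph Red V1).Adj u v ↔ v = μ u) ∧
    ¬ (crossSubgraph Red V1).Connected ∧
    ¬ ∃ X : Set V, (crossSubgraph Red X).Connected ∧ (crossSubgraph Bl X).Connected := by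
  -- part 1
  have part1 : ∀ X : Set V, (crossSubgraph Bl X).Connected → (X = V1 ∨ X = V1ᶜ) := by
    intro X hX
    have hinvP : ∀ u v, (crossSubgraph Bl X).Adj u v →
        ((u ∈ X ↔ u ∈ V1) → (v ∈ X ↔ v ∈ V1)) := by
      intro u v ⟨hadj, hx⟩ hP
      have hb := hbip u v hadj
      tauto
    have hinvN : ∀ u v, (crossSubgraph Bl X).Adj u v →
        (¬(u ∈ X ↔ u ∈ V1) → ¬(v ∈ X ↔ v ∈ V1)) := by
      intro u v ⟨hadj, hx⟩ hP
      have hb := hbip u v hadj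
      tauto
    have hne : Nonempty V := hX.nonempty
    obtain ⟨v0⟩ := hne
    by_cases h0 : v0 ∈ X ↔ v0 ∈ V1
    · left
      ext v
      obtain ⟨w⟩ := hX.preconnected v0 v
      exact walk_invar hinvP w h0
    · right
      ext v
      obtain ⟨w⟩ := hX.preconnected v0 v
      have := walk_invar hinvN w h0
      simp only [Set.mem_compl_iff]
      tauto
  -- part 2
  have part2 : ∀ u v : V, (crossSubgraph Red V1).Adj u v ↔ v = μ u := by
    intro u v
    constructor
    · rintro ⟨hr, hx⟩
      rcases (hred u v).1 hr with ⟨_, h⟩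
      tauto
    · rintro rfl
      have h1 := hcrossμ u
      have h2 := hnofix u
      refine ⟨(hred u (μ u)).2 ⟨fun h => h2 h.symm, Or.inr rfl⟩, ?_⟩
      tauto
  -- part 3
  have part3 : ¬ (crossSubgraph Red V1).Connected := by
    intro hc
    have h2 : 1 < V1.ncard := lt_of_lt_of_le (by omega) hsize.2
    obtain ⟨a, b, ha, hb, hab⟩ := (Set.one_lt_ncard_iff V1.toFinite).1 h2
    have hreach : (crossSubgraph Red V1).Reachable a b := hc.preconnected a b
    obtain ⟨w⟩ := hreach
    have : b = a ∨ b = μ a := by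
      refine walk_invar (P := fun v => v = a ∨ v = μ a) ?_ w (Or.inl rfl)
      intro u v huv hu
      have hv : v = μ u := (part2 u v).1 huv
      rcases hu with rfl | rfl
      · exact Or.inr hv
      · left; rw [hv, hinv]
    rcases this with rfl | rfl
    · exact hab rfl
    · exact ((hcrossμ a).1 ha) hb
  refine ⟨part1, part2, part3, ?_⟩
  rintro ⟨X, hredc, hbluec⟩
  have hcompl : crossSubgraph Red V1ᶜ = crossSubgraph Red V1 := by
    ext u v
    simp only [crossSubgraph, Set.mem_compl_iff]
    tauto
  rcases part1 X hbluec with rfl | rfl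
  · exact part3 hredc
  · rw [hcompl] at hredc
    exact part3 hredc
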